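/- The set absint(P) of size-change graphs produced by the abstract interpretation is safe for the program P: whenever P:[] →* s₁ → s₂ in the environment-based semantics, some G ∈ absint(P) is safe for the pair (s₁, s₂). -/

import Mathlib

/- Untyped λ-expressions. -/
inductive Exp : Type
  | var : String → Exp
  | app : Exp → Exp → Exp
  | lam : String → Exp → Exp
deriving DecidableEq

namespace Exp

/-- Free variables. -/
def fv : Exp → Finset String
  | var x => {x}
  | app e1 e2 => fv e1 ∪ fv e2
  | lam x e => fv e \ {x}

/-- The set of subexpressions of a λ-expression. -/
def subexp : Exp → Set Exp
  | var x => {var x}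
  | app e1 e2 => insert (app e1 e2) (subexp e1 ∪ subexp e2)
  | lam x e => insert (lam x e) (subexp e)

end Exp

/- Values (closures), environments and states of the environment-based
semantics.  An environment is a (partial) map from variable names to values;
a state `e:ρ` pairs an expression with an environment. -/
inductive Val : Type
  | clos : String → Exp → (String → Option Val) → Val

abbrev Env := String → Option Val
abbrev State := Exp × Env

/-- A value `λx.e:ρ` viewed as a state. -/
def Val.toState : Val → State
  | .clos x e ρ => (Exp.lam x e, ρ)

/-- The λ-expression component of a value. -/
def Val.toExp : Val → Exp
  | .clos x e _ => Exp.lam x e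

def Env.update (ρ : Env) (x : String) (v : Val) : Env :=
  fun y => if y = x then some v else ρ y

def Env.empty : Env := fun _ => none
/- Environment-based evaluation `s ⇓ v` and the call relations
`→r` (Operator), `→d` (Operand), `→c` (Call); (Apply) evaluates an
application via its `→c` call. -/
mutual
  inductive EvalE : State → Val → Prop
    | value (x : String) (e : Exp) (ρ : Env) :
        EvalE (Exp.lam x e, ρ) (Val.clos x e ρ)
    | var {ρ : Env} {x : String} {v : Val} :
        ρ x = some v → EvalE (Exp.var x, ρ) v
    | apply {s s' : State} {v : Val} :
        CallC s s' → EvalE s' v → EvalE s v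
  inductive CallC : State → State → Prop
    | call {e1 e2 : Exp} {ρ ρ0 : Env} {x : String} {e0 : Exp} {v2 : Val} :
        EvalE (e1, ρ) (Val.clos x e0 ρ0) → EvalE (e2, ρ) v2 →
        CallC (Exp.app e1 e2, ρ) (e0, Env.update ρ0 x v2)
end

inductive CallR : State → State → Prop
  | oper (e1 e2 : Exp) (ρ : Env) : CallR (Exp.app e1 e2, ρ) (e1, ρ)

inductive CallD : State → State → Prop
  | opnd {e1 : Exp} {ρ : Env} {v1 : Val} (e2 : Exp) :
      EvalE (e1, ρ) v1 → CallD (Exp.app e1 e2, ρ) (e2, ρ)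

/-- The call relation `→` on states is `→r ∪ →d ∪ →c`. -/
def Call (s s' : State) : Prop := CallR s s' ∨ CallD s s' ∨ CallC s s'
/-- `Supp s s'` means `s' ∈ support(s)`, where
`support(e:ρ) = {e:ρ} ∪ ⋃_{x ∈ fv(e)} support(ρ(x))`. -/
inductive Supp : State → State → Prop
  | refl (s : State) : Supp s s
  | env {e : Exp} {ρ : Env} {x : String} {v : Val} {s' : State} :
      x ∈ e.fv → ρ x = some v → Supp v.toState s' → Supp (e, ρ) s'

/-- `s₁ ≻₁ s₂`: `s₂` is in the support of `s₁` and `s₁ ≠ s₂`. -/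
def Gt1 (s1 s2 : State) : Prop := Supp s1 s2 ∧ s1 ≠ s2

/-- `e₁:ρ₁ ≻₂ e₂:ρ₂`: `e₂` is a subexpression of `e₁`, `e₁ ≠ e₂`, and the
environments agree on `fv(e₂)`. -/
def Gt2 (s1 s2 : State) : Prop :=
  s2.1 ∈ Exp.subexp s1.1 ∧ s1.1 ≠ s2.1 ∧ ∀ x ∈ s2.1.fv, s1.2 x = s2.2 x

/-- `⪰` is the transitive closure of `≻₁ ∪ ≻₂ ∪ =`. -/
def Geq : State → State → Prop :=
  Relation.TransGen (fun s1 s2 => Gt1 s1 s2 ∨ Gt2 s1 s2 ∨ s1 = s2)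

/-- `s₁ ≻ s₂` iff `s₁ ⪰ s₂` and `s₁ ≠ s₂`. -/
def Gt (s1 s2 : State) : Prop := Geq s1 s2 ∧ s1 ≠ s2
/-- `GB s p` means the name path `p` belongs to the graph basis `gb(s)`:
`gb(e:ρ) = {ε} ∪ { xp | x ∈ fv(e), p ∈ gb(ρ(x)) }`. -/
inductive GB : State → List String → Prop
  | nil (s : State) : GB s []
  | cons {e : Exp} {ρ : Env} {x : String} {v : Val} {p : List String} :
      x ∈ e.fv → ρ x = some v → GB v.toState p → GB (e, ρ) (x :: p)

/-- `Valn s p s'` means `s̄(p) = s'`, the substate of `s` identified by the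
name path `p`:  `s̄(ε) = s` and `(e:ρ)‾(xp) = (ρ(x))‾(p)`. -/
inductive Valn : State → List String → State → Prop
  | nil (s : State) : Valn s [] s
  | cons {e : Exp} {ρ : Env} {x : String} {v : Val} {p : List String} {s' : State} :
      ρ x = some v → Valn v.toState p s' → Valn (e, ρ) (x :: p) s'
/-- Arc labels: `=` (eq) and `↓` (dec). -/
inductive Lab : Type
  | eq : Lab
  | dec : Lab
deriving DecidableEq

/-- Name paths; here the nodes of generated size-change graphs are `ε = []`
or single variables `[y]`. -/
abbrev NP := List String
abbrev Arc := NP × Lab × NP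
abbrev ArcSet := Set Arc

/-- `id= = {ε =→ ε} ∪ {y =→ y | y ∈ s}`. -/
def idEqS (s : Set String) : ArcSet :=
  {a | a = ([], Lab.eq, []) ∨ ∃ y ∈ s, a = ([y], Lab.eq, [y])}

/-- `id↓ = {ε ↓→ ε} ∪ {y =→ y | y ∈ s}`. -/
def idDecS (s : Set String) : ArcSet :=
  {a | a = ([], Lab.dec, []) ∨ ∃ y ∈ s, a = ([y], Lab.eq, [y])}

/-- The graph `{x =→ ε} ∪ {x ↓→ y | y ∈ s}` of the variable rule. -/
def varGraphS (x : String) (s : Set String) : ArcSet :=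
  {a | a = ([x], Lab.eq, []) ∨ ∃ y ∈ s, a = ([x], Lab.dec, [y])}

/-- `G₁^{-ε/λx.e₀}`: keep arcs between variables, replace `ε r→ z` (`z` a
variable) by `ε ↓→ z`, and, when `x ∉ fv(e₀)`, additionally replace each
arc `p r→ ε` by `p ↓→ ε`.  (`fve0` is `fv(e₀)`.) -/
def GminusS (x : String) (fve0 : Set String) (G1 : ArcSet) : ArcSet :=
  {a | (∃ (y : String) (r : Lab) (z : String), a = ([y], r, [z]) ∧ ([y], r, [z]) ∈ G1) ∨
       (∃ z : String, a = (([] : NP), Lab.dec, [z]) ∧ ∃ r, (([] : NP), r, [z]) ∈ G1) ∨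
       (x ∉ fve0 ∧ ∃ p : NP, a = (p, Lab.dec, ([] : NP)) ∧ ∃ r, (p, r, ([] : NP)) ∈ G1)}

/-- `G₂^{ε↦x}`: `y r→ x` for each `y r→ ε ∈ G₂`, and `ε ↓→ x` for each
`ε r→ ε ∈ G₂`. -/
def GepsS (x : String) (G2 : ArcSet) : ArcSet :=
  {a | (∃ (y : String) (r : Lab), a = ([y], r, [x]) ∧ ([y], r, ([] : NP)) ∈ G2) ∨
       (a = (([] : NP), Lab.dec, [x]) ∧ ∃ r, (([] : NP), r, ([] : NP)) ∈ G2)}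

/-- `∪_{e₀}`: union restricted to arcs whose target is in `fv(e₀) ∪ {ε}`. -/
def unionRS (fve0 : Set String) (A B : ArcSet) : ArcSet :=
  {a | a ∈ A ∪ B ∧ (a.2.2 = ([] : NP) ∨ ∃ y ∈ fve0, a.2.2 = [y])}

/-- The label set `R(x,z)` used in graph composition. -/
def labelsA (G1 G2 : ArcSet) (x z : NP) : Set Lab :=
  {r | ∃ y s, ((x, r, y) ∈ G1 ∧ (y, s, z) ∈ G2) ∨
              ((x, s, y) ∈ G1 ∧ (y, r, z) ∈ G2)}

/-- Composition `G₁;G₂` of size-change graphs (as arc sets): `x ↓→ z` whenever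
`↓ ∈ R(x,z)`, and `x =→ z` whenever `R(x,z) = {=}`. -/
def compA (G1 G2 : ArcSet) : ArcSet :=
  {a | (∃ x z, a = (x, Lab.dec, z) ∧ Lab.dec ∈ labelsA G1 G2 x z) ∨
       (∃ x z, a = (x, Lab.eq, z) ∧ labelsA G1 G2 x z = {Lab.eq})}
/- The graph-generating approximate semantics (for a fixed program `P`):
judgements `e ⇓ e', G` and `e →x e', G` on λ-expressions. -/
mutual
  inductive EvalAG (P : Exp) : Exp → Exp → ArcSet → Prop
    | value (x : String) (e : Exp) :
        EvalAG P (Exp.lam x e) (Exp.lam x e) (idEqS ↑(Exp.lam x e).fv)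
    | var {e1 e2 : Exp} {x : String} {e0 v2 : Exp} {G1 G2 : ArcSet} :
        Exp.app e1 e2 ∈ Exp.subexp P →
        EvalAG P e1 (Exp.lam x e0) G1 → EvalAG P e2 v2 G2 →
        EvalAG P (Exp.var x) v2 (varGraphS x ↑v2.fv)
    | apply {a e' v : Exp} {G' G : ArcSet} :
        CallAGc P a e' G' → EvalAG P e' v G → EvalAG P a v (compA G' G)
  inductive CallAGc (P : Exp) : Exp → Exp → ArcSet → Prop
    | call {e1 e2 : Exp} {x : String} {e0 v2 : Exp} {G1 G2 : ArcSet} :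
        EvalAG P e1 (Exp.lam x e0) G1 → EvalAG P e2 v2 G2 →
        CallAGc P (Exp.app e1 e2) e0
          (unionRS ↑e0.fv (GminusS x ↑e0.fv G1) (GepsS x G2))
end

inductive CallAGr (P : Exp) : Exp → Exp → ArcSet → Prop
  | oper (e1 e2 : Exp) : CallAGr P (Exp.app e1 e2) e1 (idDecS ↑e1.fv)

inductive CallAGd (P : Exp) : Exp → Exp → ArcSet → Prop
  | opnd (e1 e2 : Exp) : CallAGd P (Exp.app e1 e2) e2 (idDecS ↑e2.fv)

/-- The approximate graph-generating call relation (union of `→r`, `→d`, `→c`). -/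
def CallAGAny (P : Exp) (e e' : Exp) (G : ArcSet) : Prop :=
  CallAGr P e e' G ∨ CallAGd P e e' G ∨ CallAGc P e e' G
/-- A (generated) size-change graph, given by its arcs, is safe for the pair
of states `(s₁,s₂)`: `p₁ =→ p₂ ∈ G` implies `s̄₁(p₁) = s̄₂(p₂)`, and
`p₁ ↓→ p₂ ∈ G` implies `s̄₁(p₁) ≻ s̄₂(p₂)`. -/
def SafeArcs (G : ArcSet) (s1 s2 : State) : Prop :=
  (∀ p1 p2, (p1, Lab.eq, p2) ∈ G →
    ∀ t1 t2, Valn s1 p1 t1 → Valn s2 p2 t2 → t1 = t2) ∧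
  (∀ p1 p2, (p1, Lab.dec, p2) ∈ G →
    ∀ t1 t2, Valn s1 p1 t1 → Valn s2 p2 t2 → Gt t1 t2)

/-- The approximate call relation, forgetting the graphs. -/
def CallAU (P : Exp) (e e' : Exp) : Prop := ∃ G, CallAGAny P e e' G

/-- `absint(P)`: all graphs `G_j (j > 0)` arising along some approximate call
chain `P = e₀ → e₁, G₁ → … → e_j, G_j`. -/
def absint (P : Exp) : Set ArcSet :=
  {G | ∃ e e' : Exp, Relation.ReflTransGen (CallAU P) P e ∧ CallAGAny P e e' G}

/-! ### Auxiliary development -/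

namespace Exp

theorem mem_subexp_self (e : Exp) : e ∈ subexp e := by
  cases e <;> simp [subexp]

theorem subexp_trans : ∀ (e3 : Exp) {e1 e2 : Exp},
    e1 ∈ subexp e2 → e2 ∈ subexp e3 → e1 ∈ subexp e3 := by
  intro e3
  induction e3 with
  | var x =>
    intro e1 e2 h12 h23
    simp only [subexp, Set.mem_singleton_iff] at h23
    subst h23; exact h12
  | app a b iha ihb =>
    intro e1 e2 h12 h23
    simp only [subexp, Set.mem_insert_iff, Set.mem_union] at h23 ⊢
    rcases h23 with h | h | h
    · subst h; simpa [subexp] using h12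
    · exact Or.inr (Or.inl (iha h12 h))
    · exact Or.inr (Or.inr (ihb h12 h))
  | lam x a iha =>
    intro e1 e2 h12 h23
    simp only [subexp, Set.mem_insert_iff] at h23 ⊢
    rcases h23 with h | h
    · subst h; simpa [subexp] using h12
    · exact Or.inr (iha h12 h)

theorem subexp_size : ∀ (e : Exp) {e' : Exp},
    e' ∈ subexp e → e' = e ∨ sizeOf e' < sizeOf e := by
  intro e
  induction e with
  | var x =>
    intro e' h; simp only [subexp, Set.mem_singleton_iff] at h; exact Or.inl h
  | app a b iha ihb =>
    intro e' h
    simp only [subexp, Set.mem_insert_iff, Set.mem_union] at h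
    rcases h with h | h | h
    · exact Or.inl h
    · right; rcases iha h with rfl | hlt <;> (simp only [app.sizeOf_spec]; omega)
    · right; rcases ihb h with rfl | hlt <;> (simp only [app.sizeOf_spec]; omega)
  | lam x a iha =>
    intro e' h
    simp only [subexp, Set.mem_insert_iff] at h
    rcases h with h | h
    · exact Or.inl h
    · right; rcases iha h with rfl | hlt <;> (simp only [lam.sizeOf_spec]; omega)

theorem size_lt_of_subexp {e e' : Exp} (h : e' ∈ subexp e) (hne : e' ≠ e) :
    sizeOf e' < sizeOf e :=
  (subexp_size e h).resolve_left hne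

end Exp

@[simp] theorem Val.toState_clos (x : String) (e : Exp) (ρ : Env) :
    (Val.clos x e ρ).toState = (Exp.lam x e, ρ) := rfl

@[simp] theorem Val.toExp_clos (x : String) (e : Exp) (ρ : Env) :
    (Val.clos x e ρ).toExp = Exp.lam x e := rfl

theorem Val.toState_fst (v : Val) : v.toState.1 = v.toExp := by cases v; rfl

/-! ### Well-foundedness of the value structure and a depth measure -/

def ValLt (w v : Val) : Prop := ∃ x e ρ y, v = Val.clos x e ρ ∧ ρ y = some w

theorem acc_valLt : ∀ v, Acc ValLt v :=
  fun v => Val.rec (motive_1 := fun v => Acc ValLt v)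
    (motive_2 := fun o => ∀ w, o = some w → Acc ValLt w)
    (fun _ _ _ ih => Acc.intro _ (fun w hw => by
      obtain ⟨x', e', ρ', y, hv, hy⟩ := hw; cases hv; exact ih y w hy))
    (fun w h => by simp at h)
    (fun v hv w h => by cases h; exact hv) v

theorem wf_valLt : WellFounded ValLt := ⟨acc_valLt⟩

noncomputable def vdepth : Val → ℕ :=
  WellFounded.fix wf_valLt (fun v ih =>
    match v, ih with
    | .clos x e ρ, ih =>
      ((Exp.lam x e).fv).sup fun y =>
        match h : ρ y with
        | some w => ih w ⟨x, e, ρ, y, rfl, h⟩ + 1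
        | none => 0)

noncomputable def odepth (o : Option Val) : ℕ :=
  match o with | some w => vdepth w + 1 | none => 0

theorem vdepth_eq (x : String) (e : Exp) (ρ : Env) :
    vdepth (Val.clos x e ρ) = ((Exp.lam x e).fv).sup (fun y => odepth (ρ y)) := by
  rw [vdepth, WellFounded.fix_eq]
  dsimp only
  congr 1
  funext y
  cases h : ρ y <;> simp [h, odepth, vdepth]

/-- Depth of a state: depth of the environment restricted to free variables. -/
noncomputable def sdepth (s : State) : ℕ := s.1.fv.sup fun y => odepth (s.2 y)

theorem sdepth_toState (v : Val) : sdepth v.toState = vdepth v := by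
  cases v with
  | clos x e ρ => rw [vdepth_eq]; rfl

/-! ### A well-founded refinement of the state order -/

/-- One-step decrease: either move to a value in the environment, or to a
proper subexpression whose free variables get the same bindings. -/
def Dstep (s t : State) : Prop :=
  (∃ x v, x ∈ s.1.fv ∧ s.2 x = some v ∧ t = v.toState) ∨
  (t.1 ∈ Exp.subexp s.1 ∧ t.1 ≠ s.1 ∧ t.1.fv ⊆ s.1.fv ∧ ∀ y ∈ t.1.fv, t.2 y = s.2 y)

def GtS : State → State → Prop := Relation.TransGen Dstep

/-- Lexicographic measure decrease. -/
def Mlt (t s : State) : Prop :=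
  sdepth t < sdepth s ∨ (sdepth t ≤ sdepth s ∧ sizeOf t.1 < sizeOf s.1)

theorem mlt_trans {a b c : State} (h1 : Mlt a b) (h2 : Mlt b c) : Mlt a c := by
  rcases h1 with h1 | ⟨h1, h1'⟩ <;> rcases h2 with h2 | ⟨h2, h2'⟩
  · exact Or.inl (h1.trans h2)
  · exact Or.inl (lt_of_lt_of_le h1 h2)
  · exact Or.inl (lt_of_le_of_lt h1 h2)
  · exact Or.inr ⟨le_trans h1 h2, lt_trans h1' h2'⟩

theorem mlt_irrefl {a : State} (h : Mlt a a) : False := by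
  rcases h with h | ⟨_, h⟩ <;> omega

theorem dstep_mlt {s t : State} (h : Dstep s t) : Mlt t s := by
  rcases h with ⟨x, v, hx, hsome, rfl⟩ | ⟨hsub, hne, hfv, henv⟩
  · left
    have h1 : odepth (s.2 x) ≤ sdepth s :=
      Finset.le_sup (f := fun y => odepth (s.2 y)) hx
    rw [hsome] at h1
    rw [sdepth_toState]
    simpa [odepth] using h1
  · right
    constructor
    · have h3 : sdepth t = t.1.fv.sup fun y => odepth (s.2 y) :=
        Finset.sup_congr rfl (fun y hy => by rw [henv y hy])
      rw [h3, sdepth]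
      exact Finset.sup_mono hfv
    · exact Exp.size_lt_of_subexp hsub hne

theorem gtS_mlt {s t : State} (h : GtS s t) : Mlt t s := by
  induction h with
  | single h => exact dstep_mlt h
  | tail _ h2 ih => exact mlt_trans (dstep_mlt h2) ih

theorem gtS_ne {s t : State} (h : GtS s t) : s ≠ t := by
  rintro rfl; exact mlt_irrefl (gtS_mlt h)

theorem dstep_ne {s t : State} (h : Dstep s t) : s ≠ t := by
  rintro rfl; exact mlt_irrefl (dstep_mlt h)

theorem gtS_trans {a b c : State} (h1 : GtS a b) (h2 : GtS b c) : GtS a c :=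
  Relation.TransGen.trans h1 h2

theorem dstep_gt12 {s t : State} (h : Dstep s t) : Gt1 s t ∨ Gt2 s t := by
  have hne := dstep_ne h
  rcases h with ⟨x, v, hx, hsome, rfl⟩ | ⟨hsub, hne2, hfv, henv⟩
  · left
    refine ⟨?_, hne⟩
    obtain ⟨e, ρ⟩ := s
    exact Supp.env hx hsome (Supp.refl _)
  · right
    exact ⟨hsub, fun hh => hne2 hh.symm, fun y hy => (henv y hy).symm⟩

theorem gtS_gt {s t : State} (h : GtS s t) : Gt s t := by
  refine ⟨?_, gtS_ne h⟩
  exact Relation.TransGen.mono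
    (fun a b hd => (dstep_gt12 hd).elim Or.inl (fun h2 => Or.inr (Or.inl h2))) _ _ h
/-! ### Valuation lemmas -/

theorem valn_nil_eq {s t : State} (h : Valn s [] t) : t = s := by cases h; rfl

theorem valn_congr {e e' : Exp} {ρ : Env} {y : String} {p : List String} {t : State}
    (h : Valn (e, ρ) (y :: p) t) : Valn (e', ρ) (y :: p) t := by
  cases h with
  | cons h1 h2 => exact Valn.cons h1 h2

theorem valn_det : ∀ {p : List String} {s t1 t2 : State},
    Valn s p t1 → Valn s p t2 → t1 = t2 := by
  intro p
  induction p with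
  | nil => intro s t1 t2 h1 h2; rw [valn_nil_eq h1, valn_nil_eq h2]
  | cons y q ih =>
    intro s t1 t2 h1 h2
    cases h1 with
    | cons a1 b1 =>
      cases h2 with
      | cons a2 b2 =>
        rw [a1] at a2
        injection a2 with hv
        subst hv
        exact ih b1 b2

theorem Env.update_self (ρ : Env) (x : String) (v : Val) :
    Env.update ρ x v x = some v := by simp [Env.update]

theorem Env.update_ne (ρ : Env) (x : String) (v : Val) {y : String} (h : y ≠ x) :
    Env.update ρ x v y = ρ y := by simp [Env.update, h]

/-! ### Strengthened safety -/

def Rel' : Lab → State → State → Prop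
  | Lab.eq => fun a b => a = b
  | Lab.dec => GtS

def Safe' (G : ArcSet) (s1 s2 : State) : Prop :=
  ∀ p1 r p2, (p1, r, p2) ∈ G → ∀ t1 t2, Valn s1 p1 t1 → Valn s2 p2 t2 → Rel' r t1 t2

theorem safe'_safeArcs {G : ArcSet} {s1 s2 : State} (h : Safe' G s1 s2) :
    SafeArcs G s1 s2 :=
  ⟨fun p1 p2 ha t1 t2 v1 v2 => h p1 Lab.eq p2 ha t1 t2 v1 v2,
   fun p1 p2 ha t1 t2 v1 v2 => gtS_gt (h p1 Lab.dec p2 ha t1 t2 v1 v2)⟩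

theorem rel'_comp {r s : Lab} {a b c : State} (h1 : Rel' r a b) (h2 : Rel' s b c)
    (h : r = Lab.dec ∨ s = Lab.dec) : GtS a c := by
  cases r <;> cases s
  · simp at h
  · exact h1 ▸ h2
  · exact h2 ▸ h1
  · exact gtS_trans h1 h2

theorem labelsA_elim {G1 G2 : ArcSet} {x z : NP} {r : Lab} (h : r ∈ labelsA G1 G2 x z) :
    ∃ y r1 r2, (x, r1, y) ∈ G1 ∧ (y, r2, z) ∈ G2 ∧ (r = r1 ∨ r = r2) := by
  obtain ⟨y, s, h⟩ := h
  rcases h with ⟨h1, h2⟩ | ⟨h1, h2⟩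
  · exact ⟨y, r, s, h1, h2, Or.inl rfl⟩
  · exact ⟨y, s, r, h1, h2, Or.inr rfl⟩

theorem labelsA_intro1 {G1 G2 : ArcSet} {x y z : NP} {r s : Lab}
    (h1 : (x, r, y) ∈ G1) (h2 : (y, s, z) ∈ G2) : r ∈ labelsA G1 G2 x z :=
  ⟨y, s, Or.inl ⟨h1, h2⟩⟩

theorem labelsA_intro2 {G1 G2 : ArcSet} {x y z : NP} {r s : Lab}
    (h1 : (x, r, y) ∈ G1) (h2 : (y, s, z) ∈ G2) : s ∈ labelsA G1 G2 x z :=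
  ⟨y, r, Or.inr ⟨h1, h2⟩⟩

theorem compA_safe {G1 G2 : ArcSet} {s1 s2 s3 : State}
    (h1 : Safe' G1 s1 s2) (h2 : Safe' G2 s2 s3)
    (htgt : ∀ p r q, (p, r, q) ∈ G1 → q = [] ∨ ∃ y ∈ s2.1.fv, q = [y])
    (hwf : ∀ y ∈ s2.1.fv, ∃ w, s2.2 y = some w) :
    Safe' (compA G1 G2) s1 s3 := by
  have mid : ∀ p r q, (p, r, q) ∈ G1 → ∃ t, Valn s2 q t := by
    intro p r q hq
    rcases htgt p r q hq with rfl | ⟨y, hy, rfl⟩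
    · exact ⟨s2, Valn.nil s2⟩
    · obtain ⟨w, hw⟩ := hwf y hy
      obtain ⟨e2, ρ2⟩ := s2
      exact ⟨w.toState, Valn.cons hw (Valn.nil _)⟩
  intro p1 r p2 harc t1 t3 hv1 hv3
  rcases harc with ⟨x', z', heq, hlab⟩ | ⟨x', z', heq, hlab⟩
  · simp only [Prod.mk.injEq] at heq
    obtain ⟨rfl, rfl, rfl⟩ := heq
    obtain ⟨q, r1, r2, a1, a2, hor⟩ := labelsA_elim hlab
    obtain ⟨tm, hvm⟩ := mid _ _ _ a1
    have R1 := h1 _ _ _ a1 _ _ hv1 hvm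
    have R2 := h2 _ _ _ a2 _ _ hvm hv3
    exact rel'_comp R1 R2 (by rcases hor with h | h
                              · exact Or.inl h.symm
                              · exact Or.inr h.symm)
  · simp only [Prod.mk.injEq] at heq
    obtain ⟨rfl, rfl, rfl⟩ := heq
    have heqmem : Lab.eq ∈ labelsA G1 G2 p1 p2 := by rw [hlab]; exact Set.mem_singleton _
    obtain ⟨q, r1, r2, a1, a2, _⟩ := labelsA_elim heqmem
    have hr1 : r1 = Lab.eq := by
      have h' := labelsA_intro1 a1 a2; rw [hlab] at h'; simpa using h'
    have hr2 : r2 = Lab.eq := by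
      have h' := labelsA_intro2 a1 a2; rw [hlab] at h'; simpa using h'
    subst hr1; subst hr2
    obtain ⟨tm, hvm⟩ := mid _ _ _ a1
    have R1 := h1 _ _ _ a1 _ _ hv1 hvm
    have R2 := h2 _ _ _ a2 _ _ hvm hv3
    exact R1.trans R2

/-! ### Targets of generated graphs -/

def TgtOK (G : ArcSet) (S : Finset String) : Prop :=
  ∀ p r q, (p, r, q) ∈ G → q = [] ∨ ∃ y ∈ S, q = [y]

theorem callAGc_tgt {P a b : Exp} {G : ArcSet} (h : CallAGc P a b G) : TgtOK G b.fv := by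
  cases h with
  | call h1 h2 =>
    intro p r q hq
    obtain ⟨-, htgt⟩ := hq
    rcases htgt with h | ⟨y, hy, h⟩
    · exact Or.inl h
    · exact Or.inr ⟨y, by exact_mod_cast hy, h⟩

theorem evalAG_tgt {P : Exp} : ∀ {e v : Exp} {G : ArcSet}, EvalAG P e v G → TgtOK G v.fv := by
  intro e v G h
  refine EvalAG.rec (motive_1 := fun e v G _ => TgtOK G v.fv)
    (motive_2 := fun a b G _ => TgtOK G b.fv) ?_ ?_ ?_ ?_ h
  · intro x e0
    intro p r q hq
    rcases hq with h' | ⟨y, hy, h'⟩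
    · simp only [Prod.mk.injEq] at h'
      exact Or.inl h'.2.2
    · simp only [Prod.mk.injEq] at h'
      exact Or.inr ⟨y, by exact_mod_cast hy, h'.2.2⟩
  · intro e1 e2 x e0 v2 G1 G2 _ _ _ _ _
    intro p r q hq
    rcases hq with h' | ⟨y, hy, h'⟩
    · simp only [Prod.mk.injEq] at h'
      exact Or.inl h'.2.2
    · simp only [Prod.mk.injEq] at h'
      exact Or.inr ⟨y, by exact_mod_cast hy, h'.2.2⟩
  · intro a e' v G' G2 _ _ _ ih2
    intro p r q hq
    rcases hq with ⟨x', z', heq, hlab⟩ | ⟨x', z', heq, hlab⟩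
    · simp only [Prod.mk.injEq] at heq
      obtain ⟨rfl, rfl, rfl⟩ := heq
      obtain ⟨y, r1, r2, _, a2, _⟩ := labelsA_elim hlab
      exact ih2 _ _ _ a2
    · simp only [Prod.mk.injEq] at heq
      obtain ⟨rfl, rfl, rfl⟩ := heq
      have heqmem : Lab.eq ∈ labelsA G' G2 p q := by rw [hlab]; exact Set.mem_singleton _
      obtain ⟨y, r1, r2, _, a2, _⟩ := labelsA_elim heqmem
      exact ih2 _ _ _ a2
  · intro e1 e2 x e0 v2 G1 G2 _ _ _ _
    intro p r q hq
    obtain ⟨-, htgt⟩ := hq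
    rcases htgt with h' | ⟨y, hy, h'⟩
    · exact Or.inl h'
    · exact Or.inr ⟨y, by exact_mod_cast hy, h'⟩
/-! ### Invariants for reachable states -/

def Witness (P : Exp) (y : String) (w : Val) : Prop :=
  ∃ e1 e2 e0 G1 G2, Exp.app e1 e2 ∈ Exp.subexp P ∧
    EvalAG P e1 (Exp.lam y e0) G1 ∧ EvalAG P e2 w.toExp G2

inductive GoodVal (P : Exp) : Val → Prop
  | mk {x : String} {e0 : Exp} {ρ : Env} :
      Exp.lam x e0 ∈ Exp.subexp P →
      (∀ y ∈ (Exp.lam x e0).fv, ∃ w, ρ y = some w) →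
      (∀ y ∈ (Exp.lam x e0).fv, ∀ w, ρ y = some w → GoodVal P w) →
      (∀ y ∈ (Exp.lam x e0).fv, ∀ w, ρ y = some w → Witness P y w) →
      GoodVal P (Val.clos x e0 ρ)

def GoodEnv (P : Exp) (ρ : Env) (S : Finset String) : Prop :=
  ∀ y ∈ S, ∃ w, ρ y = some w ∧ GoodVal P w ∧ Witness P y w

theorem goodEnv_mono {P : Exp} {ρ : Env} {S T : Finset String}
    (h : GoodEnv P ρ S) (hTS : T ⊆ S) : GoodEnv P ρ T :=
  fun y hy => h y (hTS hy)

theorem goodVal_sub {P : Exp} {x : String} {e0 : Exp} {ρ : Env}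
    (h : GoodVal P (Val.clos x e0 ρ)) : Exp.lam x e0 ∈ Exp.subexp P := by
  cases h; assumption

theorem goodVal_env {P : Exp} {x : String} {e0 : Exp} {ρ : Env}
    (h : GoodVal P (Val.clos x e0 ρ)) : GoodEnv P ρ (Exp.lam x e0).fv := by
  cases h with
  | mk h1 h2 h3 h4 =>
    intro y hy
    obtain ⟨w, hw⟩ := h2 y hy
    exact ⟨w, hw, h3 y hy w hw, h4 y hy w hw⟩

theorem goodVal_of_env {P : Exp} {x : String} {e0 : Exp} {ρ : Env}
    (hsub : Exp.lam x e0 ∈ Exp.subexp P)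
    (h : GoodEnv P ρ (Exp.lam x e0).fv) : GoodVal P (Val.clos x e0 ρ) := by
  refine GoodVal.mk hsub ?_ ?_ ?_
  · intro y hy; obtain ⟨w, hw, -, -⟩ := h y hy; exact ⟨w, hw⟩
  · intro y hy w hw
    obtain ⟨w', hw', hg, -⟩ := h y hy
    rw [hw] at hw'; injection hw' with hw'; exact hw' ▸ hg
  · intro y hy w hw
    obtain ⟨w', hw', -, hwit⟩ := h y hy
    rw [hw] at hw'; injection hw' with hw'; exact hw' ▸ hwit

/-! ### Structural `Exp` facts and basic `Dstep`s -/

namespace Exp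

theorem left_mem_subexp_app (e1 e2 : Exp) : e1 ∈ subexp (app e1 e2) := by
  simp [subexp, mem_subexp_self]

theorem right_mem_subexp_app (e1 e2 : Exp) : e2 ∈ subexp (app e1 e2) := by
  simp [subexp, mem_subexp_self]

theorem body_mem_subexp_lam (x : String) (e : Exp) : e ∈ subexp (lam x e) := by
  simp [subexp, mem_subexp_self]

theorem ne_app_left (e1 e2 : Exp) : e1 ≠ app e1 e2 := by
  intro h
  have := congrArg sizeOf h
  simp only [app.sizeOf_spec] at this
  omega

theorem ne_app_right (e1 e2 : Exp) : e2 ≠ app e1 e2 := by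
  intro h
  have := congrArg sizeOf h
  simp only [app.sizeOf_spec] at this
  omega

theorem ne_lam_body (x : String) (e : Exp) : e ≠ lam x e := by
  intro h
  have := congrArg sizeOf h
  simp only [lam.sizeOf_spec] at this
  omega

end Exp

theorem dstep_app_left (e1 e2 : Exp) (ρ : Env) :
    Dstep (Exp.app e1 e2, ρ) (e1, ρ) :=
  Or.inr ⟨Exp.left_mem_subexp_app e1 e2, Exp.ne_app_left e1 e2,
    by simp [Exp.fv], fun _ _ => rfl⟩

theorem dstep_app_right (e1 e2 : Exp) (ρ : Env) :
    Dstep (Exp.app e1 e2, ρ) (e2, ρ) :=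
  Or.inr ⟨Exp.right_mem_subexp_app e1 e2, Exp.ne_app_right e1 e2,
    by simp [Exp.fv], fun _ _ => rfl⟩

theorem dstep_lam_body {x : String} {e0 : Exp} (ρ0 : Env) (v2 : Val)
    (hx : x ∉ e0.fv) :
    Dstep (Exp.lam x e0, ρ0) (e0, Env.update ρ0 x v2) := by
  right
  refine ⟨Exp.body_mem_subexp_lam x e0, Exp.ne_lam_body x e0, ?_, ?_⟩
  · intro y hy
    simp only [Exp.fv, Finset.mem_sdiff, Finset.mem_singleton]
    exact ⟨hy, fun h => hx (h ▸ hy)⟩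
  · intro y hy
    exact Env.update_ne ρ0 x v2 (fun h => hx (h ▸ hy))

/-! ### Safety of the call rule -/

theorem call_safe {e1 e2 : Exp} {x : String} {e0 : Exp} {v2 : Val} {ρ ρ0 : Env}
    {G1 G2 : ArcSet}
    (hs1 : Safe' G1 (e1, ρ) (Exp.lam x e0, ρ0))
    (hs2 : Safe' G2 (e2, ρ) v2.toState)
    (ht1 : TgtOK G1 (Exp.lam x e0).fv) :
    Safe' (unionRS ↑e0.fv (GminusS x ↑e0.fv G1) (GepsS x G2))
      (Exp.app e1 e2, ρ) (e0, Env.update ρ0 x v2) := by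
  intro p1 r p2 harc t1 t2 hv1 hv2
  obtain ⟨hmem, _⟩ := harc
  -- helper to move Valn on the updated env back to ρ0 for a non-binder variable
  have back : ∀ {z : String} {t : State}, z ≠ x →
      Valn (e0, Env.update ρ0 x v2) [z] t → Valn (Exp.lam x e0, ρ0) [z] t := by
    intro z t hz hv
    cases hv with
    | cons h1 h2 =>
      rw [Env.update_ne ρ0 x v2 hz] at h1
      exact Valn.cons h1 h2
  -- binder variable valuation
  have atx : ∀ {t : State}, Valn (e0, Env.update ρ0 x v2) [x] t → t = v2.toState := by
    intro t hv
    cases hv with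
    | cons h1 h2 =>
      rw [Env.update_self] at h1
      injection h1 with h1
      subst h1
      exact valn_nil_eq h2
  rcases hmem with hm | hm
  · -- GminusS cases
    rcases hm with ⟨y, r', z, heq, hG1⟩ | ⟨z, heq, r', hG1⟩ | ⟨hx0, p, heq, r', hG1⟩
    · -- variable-to-variable arc from G1
      simp only [Prod.mk.injEq] at heq
      obtain ⟨rfl, rfl, rfl⟩ := heq
      have hz : z ∈ (Exp.lam x e0).fv := by
        rcases ht1 _ _ _ hG1 with h | ⟨y', hy', h⟩
        · exact absurd h (by simp)
        · injection h with h _; subst h; exact hy'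
      have hzx : z ≠ x := by
        simp only [Exp.fv, Finset.mem_sdiff, Finset.mem_singleton] at hz
        exact hz.2
      exact hs1 _ _ _ hG1 _ _ (valn_congr hv1) (back hzx hv2)
    · -- ε-to-variable arc, forced decrease
      simp only [Prod.mk.injEq] at heq
      obtain ⟨rfl, rfl, rfl⟩ := heq
      have hz : z ∈ (Exp.lam x e0).fv := by
        rcases ht1 _ _ _ hG1 with h | ⟨y', hy', h⟩
        · exact absurd h (by simp)
        · injection h with h _; subst h; exact hy'
      have hzx : z ≠ x := by
        simp only [Exp.fv, Finset.mem_sdiff, Finset.mem_singleton] at hz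
        exact hz.2
      have ht1' : t1 = (Exp.app e1 e2, ρ) := valn_nil_eq hv1
      subst ht1'
      have R := hs1 _ _ _ hG1 _ _ (Valn.nil (e1, ρ)) (back hzx hv2)
      show GtS _ _
      cases r' with
      | eq =>
        exact Relation.TransGen.single (R ▸ dstep_app_left e1 e2 ρ)
      | dec =>
        exact Relation.TransGen.head (dstep_app_left e1 e2 ρ) R
    · -- arc into ε when the binder is not free in the body
      simp only [Prod.mk.injEq] at heq
      obtain ⟨rfl, rfl, rfl⟩ := heq
      have hx0' : x ∉ e0.fv := by simpa using hx0
      have ht2' : t2 = (e0, Env.update ρ0 x v2) := valn_nil_eq hv2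
      subst ht2'
      have last : Dstep (Exp.lam x e0, ρ0) (e0, Env.update ρ0 x v2) :=
        dstep_lam_body ρ0 v2 hx0'
      show GtS _ _
      cases p1 with
      | nil =>
        have ht1' : t1 = (Exp.app e1 e2, ρ) := valn_nil_eq hv1
        subst ht1'
        have R := hs1 _ _ _ hG1 _ _ (Valn.nil (e1, ρ)) (Valn.nil (Exp.lam x e0, ρ0))
        cases r' with
        | eq =>
          exact Relation.TransGen.head (dstep_app_left e1 e2 ρ)
            (Relation.TransGen.single (R ▸ last))
        | dec =>
          exact Relation.TransGen.head (dstep_app_left e1 e2 ρ)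
            (Relation.TransGen.tail R last)
      | cons y q =>
        have R := hs1 _ _ _ hG1 _ _ (valn_congr hv1) (Valn.nil (Exp.lam x e0, ρ0))
        cases r' with
        | eq => exact Relation.TransGen.single (R ▸ last)
        | dec => exact Relation.TransGen.tail R last
  · -- GepsS cases
    rcases hm with ⟨y, r', heq, hG2⟩ | ⟨heq, r', hG2⟩
    · simp only [Prod.mk.injEq] at heq
      obtain ⟨rfl, rfl, rfl⟩ := heq
      have ht2' := atx hv2
      subst ht2'
      exact hs2 _ _ _ hG2 _ _ (valn_congr hv1) (Valn.nil _)
    · simp only [Prod.mk.injEq] at heq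
      obtain ⟨rfl, rfl, rfl⟩ := heq
      have ht2' := atx hv2
      subst ht2'
      have ht1' : t1 = (Exp.app e1 e2, ρ) := valn_nil_eq hv1
      subst ht1'
      have R := hs2 _ _ _ hG2 _ _ (Valn.nil (e2, ρ)) (Valn.nil _)
      show GtS _ _
      cases r' with
      | eq =>
        exact Relation.TransGen.single (R ▸ dstep_app_right e1 e2 ρ)
      | dec =>
        exact Relation.TransGen.head (dstep_app_right e1 e2 ρ) R
/-! ### The main simulation/safety lemma -/

def M1 (P : Exp) (s : State) (v : Val) : Prop :=
  s.1 ∈ Exp.subexp P → GoodEnv P s.2 s.1.fv →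
    GoodVal P v ∧ ∃ G, EvalAG P s.1 v.toExp G ∧ Safe' G s v.toState

def M2 (P : Exp) (s s' : State) : Prop :=
  s.1 ∈ Exp.subexp P → GoodEnv P s.2 s.1.fv →
    s'.1 ∈ Exp.subexp P ∧ GoodEnv P s'.2 s'.1.fv ∧
      ∃ G, CallAGc P s.1 s'.1 G ∧ Safe' G s s'

section MainCases

variable {P : Exp}

theorem case_value (x : String) (e : Exp) (ρ : Env) :
    M1 P (Exp.lam x e, ρ) (Val.clos x e ρ) := by
  intro hsub hgood
  refine ⟨goodVal_of_env hsub hgood, idEqS ↑(Exp.lam x e).fv, EvalAG.value x e, ?_⟩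
  intro p1 r p2 harc t1 t2 hv1 hv2
  rcases harc with h | ⟨y, hy, h⟩
  · simp only [Prod.mk.injEq] at h
    obtain ⟨rfl, rfl, rfl⟩ := h
    show t1 = t2
    rw [valn_nil_eq hv1, valn_nil_eq hv2, Val.toState_clos]
  · simp only [Prod.mk.injEq] at h
    obtain ⟨rfl, rfl, rfl⟩ := h
    rw [Val.toState_clos] at hv2
    exact valn_det hv1 hv2

theorem case_var {ρ : Env} {x : String} {v : Val} (h : ρ x = some v) :
    M1 P (Exp.var x, ρ) v := by
  intro hsub hgood
  have hx : x ∈ (Exp.var x).fv := by simp [Exp.fv]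
  obtain ⟨w, hw, hgv, hwit⟩ := hgood x hx
  have hw' : ρ x = some w := hw
  rw [h] at hw'
  injection hw' with hw
  subst hw
  obtain ⟨a1, a2, a0, Ga, Gb, happ, hA, hB⟩ := hwit
  refine ⟨hgv, varGraphS x ↑(v.toExp).fv, EvalAG.var happ hA hB, ?_⟩
  intro p1 r p2 harc t1 t2 hv1 hv2
  rcases harc with hh | ⟨y, hy, hh⟩
  · simp only [Prod.mk.injEq] at hh
    obtain ⟨rfl, rfl, rfl⟩ := hh
    show t1 = t2
    cases hv1 with
    | cons h1 h2 =>
      rw [h] at h1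
      injection h1 with h1
      subst h1
      rw [valn_nil_eq h2, valn_nil_eq hv2]
  · simp only [Prod.mk.injEq] at hh
    obtain ⟨rfl, rfl, rfl⟩ := hh
    show GtS t1 t2
    cases hv1 with
    | cons h1 h2 =>
      rw [h] at h1
      injection h1 with h1
      subst h1
      rw [valn_nil_eq h2]
      cases v with
      | clos a b ρb =>
        rw [Val.toState_clos] at hv2 ⊢
        cases hv2 with
        | cons hb1 hb2 =>
          rw [valn_nil_eq hb2]
          refine Relation.TransGen.single (Or.inl ⟨y, _, ?_, hb1, rfl⟩)
          have hy' : y ∈ ((Val.clos a b ρb).toExp).fv := Finset.mem_coe.mp hy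
          simpa using hy'

theorem case_apply {s s' : State} {v : Val} (_ : CallC s s') (_ : EvalE s' v)
    (ih2 : M2 P s s') (ih1 : M1 P s' v) : M1 P s v := by
  intro hsub hgood
  obtain ⟨hsub', hgood', G', hcall, hsafe'⟩ := ih2 hsub hgood
  obtain ⟨hgv, G, heval, hsafe⟩ := ih1 hsub' hgood'
  refine ⟨hgv, compA G' G, EvalAG.apply hcall heval, ?_⟩
  exact compA_safe hsafe' hsafe (callAGc_tgt hcall)
    (fun y hy => (hgood' y hy).imp (fun w hh => hh.1))

theorem case_call {e1 e2 : Exp} {ρ ρ0 : Env} {x : String} {e0 : Exp} {v2 : Val}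
    (_ : EvalE (e1, ρ) (Val.clos x e0 ρ0)) (_ : EvalE (e2, ρ) v2)
    (ih1 : M1 P (e1, ρ) (Val.clos x e0 ρ0)) (ih2 : M1 P (e2, ρ) v2) :
    M2 P (Exp.app e1 e2, ρ) (e0, Env.update ρ0 x v2) := by
  intro hsub hgood
  have hsub1 : e1 ∈ Exp.subexp P :=
    Exp.subexp_trans P (Exp.left_mem_subexp_app e1 e2) hsub
  have hsub2 : e2 ∈ Exp.subexp P :=
    Exp.subexp_trans P (Exp.right_mem_subexp_app e1 e2) hsub
  have hg1 : GoodEnv P ρ e1.fv := goodEnv_mono hgood (by simp [Exp.fv])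
  have hg2 : GoodEnv P ρ e2.fv := goodEnv_mono hgood (by simp [Exp.fv])
  obtain ⟨hgv1, G1, hev1, hsf1⟩ := ih1 hsub1 hg1
  obtain ⟨hgv2, G2, hev2, hsf2⟩ := ih2 hsub2 hg2
  have hev1' : EvalAG P e1 (Exp.lam x e0) G1 := hev1
  have hlam : Exp.lam x e0 ∈ Exp.subexp P := goodVal_sub hgv1
  refine ⟨Exp.subexp_trans P (Exp.body_mem_subexp_lam x e0) hlam, ?_,
    unionRS ↑e0.fv (GminusS x ↑e0.fv G1) (GepsS x G2),
    CallAGc.call hev1' hev2, ?_⟩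
  · intro y hy
    by_cases hyx : y = x
    · subst hyx
      exact ⟨v2, Env.update_self ρ0 y v2, hgv2,
        ⟨e1, e2, e0, G1, G2, hsub, hev1', hev2⟩⟩
    · have hy' : y ∈ (Exp.lam x e0).fv := by
        simp only [Exp.fv, Finset.mem_sdiff, Finset.mem_singleton]
        exact ⟨hy, hyx⟩
      obtain ⟨w, hw, hg, hwit⟩ := goodVal_env hgv1 y hy'
      have hupd : Env.update ρ0 x v2 y = some w := by
        rw [Env.update_ne _ _ _ hyx]; exact hw
      exact ⟨w, hupd, hg, hwit⟩
  · have hsf1' : Safe' G1 (e1, ρ) (Exp.lam x e0, ρ0) := hsf1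
    exact call_safe hsf1' hsf2 (evalAG_tgt hev1')

end MainCases

theorem evalE_main {P : Exp} {s : State} {v : Val} (h : EvalE s v) : M1 P s v :=
  EvalE.rec (motive_1 := fun s v _ => M1 P s v) (motive_2 := fun s s' _ => M2 P s s')
    case_value (fun h => case_var h) (fun hc he ih2 ih1 => case_apply hc he ih2 ih1)
    (fun h1 h2 ih1 ih2 => case_call h1 h2 ih1 ih2) h

theorem callC_main {P : Exp} {s s' : State} (h : CallC s s') : M2 P s s' :=
  CallC.rec (motive_1 := fun s v _ => M1 P s v) (motive_2 := fun s s' _ => M2 P s s')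
    case_value (fun h => case_var h) (fun hc he ih2 ih1 => case_apply hc he ih2 ih1)
    (fun h1 h2 ih1 ih2 => case_call h1 h2 ih1 ih2) h
/-- `absint(P)` is safe for `P`: whenever `P:[] →* s₁ → s₂` in the
environment-based semantics, some `G ∈ absint(P)` is safe for `(s₁,s₂)`. -/
theorem absint_safe (P : Exp) (hP : P.fv = ∅) :
    ∀ s1 s2 : State, Relation.ReflTransGen Call (P, Env.empty) s1 → Call s1 s2 →
      ∃ G ∈ absint P, SafeArcs G s1 s2 := by
  have inv : ∀ s : State, Relation.ReflTransGen Call (P, Env.empty) s →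
      s.1 ∈ Exp.subexp P ∧ GoodEnv P s.2 s.1.fv ∧
        Relation.ReflTransGen (CallAU P) P s.1 := by
    intro s h
    induction h with
    | refl =>
      refine ⟨Exp.mem_subexp_self P, ?_, Relation.ReflTransGen.refl⟩
      intro y hy
      have hy' : y ∈ P.fv := hy
      rw [hP] at hy'
      exact absurd hy' (by simp)
    | tail hab hbc ih =>
      obtain ⟨ih1, ih2, ih3⟩ := ih
      rcases (hbc : CallR _ _ ∨ CallD _ _ ∨ CallC _ _) with hr | hd | hc
      · cases hr with
        | oper e1 e2 ρ =>
          exact ⟨Exp.subexp_trans P (Exp.left_mem_subexp_app e1 e2) ih1,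
            goodEnv_mono ih2 (by simp [Exp.fv]),
            ih3.tail ⟨_, Or.inl (CallAGr.oper e1 e2)⟩⟩
      · cases hd with
        | opnd e2 hev =>
          exact ⟨Exp.subexp_trans P (Exp.right_mem_subexp_app _ e2) ih1,
            goodEnv_mono ih2 (by simp [Exp.fv]),
            ih3.tail ⟨_, Or.inr (Or.inl (CallAGd.opnd _ e2))⟩⟩
      · obtain ⟨h1', h2', G, hcg, -⟩ := callC_main hc ih1 ih2
        exact ⟨h1', h2', ih3.tail ⟨G, Or.inr (Or.inr hcg)⟩⟩
  intro s1 s2 hreach hcall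
  obtain ⟨i1, i2, i3⟩ := inv s1 hreach
  rcases (hcall : CallR _ _ ∨ CallD _ _ ∨ CallC _ _) with hr | hd | hc
  · cases hr with
    | oper e1 e2 ρ =>
      refine ⟨idDecS ↑e1.fv, ⟨_, _, i3, Or.inl (CallAGr.oper e1 e2)⟩,
        safe'_safeArcs ?_⟩
      intro p1 r p2 harc t1 t2 hv1 hv2
      rcases harc with h | ⟨y, hy, h⟩
      · simp only [Prod.mk.injEq] at h
        obtain ⟨rfl, rfl, rfl⟩ := h
        obtain rfl := valn_nil_eq hv1
        obtain rfl := valn_nil_eq hv2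
        exact Relation.TransGen.single (dstep_app_left e1 e2 ρ)
      · simp only [Prod.mk.injEq] at h
        obtain ⟨rfl, rfl, rfl⟩ := h
        exact valn_det (valn_congr hv1) hv2
  · cases hd with
    | opnd e2 hev =>
      refine ⟨idDecS ↑e2.fv, ⟨_, _, i3, Or.inr (Or.inl (CallAGd.opnd _ e2))⟩,
        safe'_safeArcs ?_⟩
      intro p1 r p2 harc t1 t2 hv1 hv2
      rcases harc with h | ⟨y, hy, h⟩
      · simp only [Prod.mk.injEq] at h
        obtain ⟨rfl, rfl, rfl⟩ := h
        obtain rfl := valn_nil_eq hv1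
        obtain rfl := valn_nil_eq hv2
        exact Relation.TransGen.single (dstep_app_right _ e2 _)
      · simp only [Prod.mk.injEq] at h
        obtain ⟨rfl, rfl, rfl⟩ := h
        exact valn_det (valn_congr hv1) hv2
  · obtain ⟨-, -, G, hcg, hsafe⟩ := callC_main hc i1 i2
    exact ⟨G, ⟨_, _, i3, Or.inr (Or.inr hcg)⟩, safe'_safeArcs hsafe⟩
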